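/- Let r, s be integers with r² + 4s ≠ 0 and let α, β be the two distinct complex roots of x² − rx − s. Suppose α·β ≠ 0, α/β is not a root of unity, and |α| ≥ |β|. Then |α| ≥ √2. -/

import Mathlib

/-- **Inequality (2.2).** Let `r, s` be integers with `r² + 4s ≠ 0` and let `α, β` be
the two distinct complex roots of `x² - r x - s` (so `α + β = r` and `αβ = -s`).
If `αβ ≠ 0`, `α/β` is not a root of unity and `|α| ≥ |β|`, then `|α| ≥ √2`. -/
theorem dominant_root_ge_sqrt_two
    (r s : ℤ) (hrs : r ^ 2 + 4 * s ≠ 0)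
    (α β : ℂ) (hαβ : α ≠ β) (hsum : α + β = (r : ℂ)) (hprod : α * β = -(s : ℂ))
    (hnd : α * β ≠ 0)
    (hnru : ∀ n : ℕ, 0 < n → (α / β) ^ n ≠ 1)
    (habs : ‖β‖ ≤ ‖α‖) :
    Real.sqrt 2 ≤ ‖α‖ := by
  by_contra hcon
  push_neg at hcon
  have hα0 : α ≠ 0 := fun h => hnd (by simp [h])
  have hβ0 : β ≠ 0 := fun h => hnd (by simp [h])
  set a := ‖α‖ with ha_def
  set b := ‖β‖ with hb_def
  have ha0 : 0 < a := norm_pos_iff.mpr hα0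
  have hb0 : 0 < b := norm_pos_iff.mpr hβ0
  have hs2 : Real.sqrt 2 ^ 2 = 2 := Real.sq_sqrt (by norm_num)
  have hs2' : (0:ℝ) ≤ Real.sqrt 2 := Real.sqrt_nonneg 2
  have ha2 : a ^ 2 < 2 := by nlinarith
  -- product of absolute values
  have hab : a * b = ((|s| : ℤ) : ℝ) := by
    rw [Int.cast_abs, ha_def, hb_def, ← norm_mul, hprod, norm_neg]
    exact Complex.norm_intCast s
  -- bound on s
  have hsb : |s| ≤ 1 := by
    have h2 : ((|s| : ℤ) : ℝ) < 2 := by nlinarith [mul_le_mul_of_nonneg_left habs ha0.le]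
    have : |s| < 2 := by exact_mod_cast h2
    omega
  have hs0 : s ≠ 0 := by
    intro h
    rw [h] at hprod
    exact hnd (by simpa using hprod)
  -- bound on r
  have hrr : ‖α + β‖ ≤ a + b := norm_add_le α β
  have hrb : |r| ≤ 2 := by
    have h1 : ((|r| : ℤ) : ℝ) < 3 := by
      rw [hsum, Complex.norm_intCast, ← Int.cast_abs] at hrr
      nlinarith
    have : |r| < 3 := by exact_mod_cast h1
    omega
  -- difference of roots
  have hsub : ‖α - β‖ ≤ a + b := by
    simpa using norm_sub_le α β
  have hdsq : ‖α - β‖ ^ 2 = |((r:ℝ)^2 + 4 * (s:ℝ))| := by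
    have hd : (α - β) ^ 2 = ((r:ℂ)^2 + 4 * (s:ℂ)) := by
      have h' : (α - β) ^ 2 = (α + β)^2 - 4 * (α * β) := by ring
      rw [h', hsum, hprod]; ring
    rw [← norm_pow, hd]
    have h'' : ((r:ℂ)^2 + 4*(s:ℂ)) = (((r:ℝ)^2 + 4*(s:ℝ) : ℝ) : ℂ) := by push_cast; ring
    rw [h'', Complex.norm_real, Real.norm_eq_abs]
  have hsubnn : 0 ≤ ‖α - β‖ := norm_nonneg _
  obtain ⟨hr1, hr2⟩ := abs_le.mp hrb
  obtain ⟨hs1, hs1'⟩ := abs_le.mp hsb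
  clear hrr hrb hsb hαβ
  interval_cases r <;> interval_cases s <;>
      (try (norm_num at hrs; done)) <;>
      norm_num at hsum hprod hdsq hrs hab ⊢ <;>
      try exact hs0 rfl
  -- remaining cases (r, s):
  -- (-2, 1) : (α-β)^2 = 8
  · nlinarith [hsub, hdsq, hsubnn, habs, hcon, hab, mul_pos ha0 hb0]
  -- (-1, -1) : cube roots of unity
  · refine hnru 3 (by norm_num) ?_
    have hα2 : α ^ 2 = -α - 1 := by linear_combination α * hsum - hprod
    have hβ2 : β ^ 2 = -β - 1 := by linear_combination β * hsum - hprod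
    have hα3 : α ^ 3 = 1 := by linear_combination (α - 1) * hα2
    have hβ3 : β ^ 3 = 1 := by linear_combination (β - 1) * hβ2
    rw [div_pow, hα3, hβ3]; norm_num
  -- (-1, 1) : golden ratio
  · nlinarith [hsub, hdsq, hsubnn, habs, hcon, hab, mul_pos ha0 hb0, sq_nonneg (a - b), sq_nonneg (a + b)]
  -- (0, -1) : β = -α
  · refine hnru 2 (by norm_num) ?_
    have hβ : β = -α := by linear_combination hsum
    rw [hβ, div_neg, div_self hα0]; norm_num
  -- (0, 1) : β = -α
  · refine hnru 2 (by norm_num) ?_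
    have hβ : β = -α := by linear_combination hsum
    rw [hβ, div_neg, div_self hα0]; norm_num
  -- (1, -1) : sixth roots of unity
  · refine hnru 6 (by norm_num) ?_
    have hα2 : α ^ 2 = α - 1 := by linear_combination α * hsum - hprod
    have hβ2 : β ^ 2 = β - 1 := by linear_combination β * hsum - hprod
    have hα6 : α ^ 6 = 1 := by linear_combination (α^4 + α^3 - α - 1) * hα2
    have hβ6 : β ^ 6 = 1 := by linear_combination (β^4 + β^3 - β - 1) * hβ2
    rw [div_pow, hα6, hβ6]; norm_num
  -- (1, 1) : golden ratio
  · nlinarith [hsub, hdsq, hsubnn, habs, hcon, hab, mul_pos ha0 hb0, sq_nonneg (a - b), sq_nonneg (a + b)]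
  -- (2, 1) : (α-β)^2 = 8
  · nlinarith [hsub, hdsq, hsubnn, habs, hcon, hab, mul_pos ha0 hb0]
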